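/- Let A be an N×s complex matrix and B an N×t complex matrix with A*A = I_s and B*B = I_t. If N < s + t, then (X − 1)^(s+t−N) divides the characteristic polynomial det(X·I_t − (B*·A)·(A*·B)) in ℂ[X]; in particular 1 is an eigenvalue of (B*·A)·(A*·B) of algebraic multiplicity at least s + t − N. -/

import Mathlib

open Matrix Polynomial

lemma aux_charpoly_sub_one {n : ℕ} (K : Matrix (Fin n) (Fin n) ℂ) :
    (K - 1).charpoly = (K.charpoly).comp (X + 1) := by
  have h : (charmatrix K).map (aeval (X + 1 : ℂ[X])) = charmatrix (K - 1) := by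
    ext i j
    by_cases hij : i = j <;>
      simp [hij, charmatrix_apply, Matrix.one_apply, aeval_X, aeval_C, map_sub, sub_sub]
    · ring
  rw [Matrix.charpoly, Matrix.charpoly, comp_eq_aeval, AlgHom.map_det, ← h]
  rfl

lemma aux_X_pow_dvd {n : ℕ} (K : Matrix (Fin n) (Fin n) ℂ) (k : ℕ)
    (hk : k ≤ Module.finrank ℂ (LinearMap.ker K.mulVecLin)) :
    X ^ k ∣ K.charpoly := by
  set φ : Module.End ℂ (Fin n → ℂ) := Matrix.mulVecLin K with hφ
  have hchar : φ.charpoly = K.charpoly := by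
    rw [← LinearMap.charpoly_toMatrix φ (Pi.basisFun ℂ (Fin n))]
    congr 1
    rw [LinearMap.toMatrix_eq_toMatrix']
    exact LinearMap.toMatrix'_toLin' K
  have h1 : LinearMap.ker φ ≤ φ.maxGenEigenspace 0 := by
    intro x hx
    rw [Module.End.mem_maxGenEigenspace]
    exact ⟨1, by simpa using hx⟩
  have h2 : k ≤ natTrailingDegree φ.charpoly := by
    rw [← LinearMap.finrank_maxGenEigenspace_zero_eq]
    exact le_trans hk (Submodule.finrank_mono h1)
  rw [← hchar]
  exact (X_pow_dvd_iff).mpr fun d hd => coeff_eq_zero_of_lt_natTrailingDegree (lt_of_lt_of_le hd h2)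

/-- If `N < s + t`, then `(X - 1)^(s + t - N)` divides the characteristic polynomial of
`(Bᴴ A)(Aᴴ B)`; in particular `1` is an eigenvalue of `(Bᴴ A)(Aᴴ B)` of algebraic
multiplicity at least `s + t - N`. -/
theorem one_eigenvalue_of_TBA_TAB
    (N s t : ℕ) (A : Matrix (Fin N) (Fin s) ℂ) (B : Matrix (Fin N) (Fin t) ℂ)
    (hA : Aᴴ * A = 1) (hB : Bᴴ * B = 1) (hN : N < s + t) :
    ((X - 1) ^ (s + t - N) ∣ ((Bᴴ * A) * (Aᴴ * B)).charpoly) ∧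
      s + t - N ≤ (((Bᴴ * A) * (Aᴴ * B)).charpoly).rootMultiplicity 1 := by

  set k := s + t - N with hk
  set M := (Bᴴ * A) * (Aᴴ * B) with hM
  set P := A * Aᴴ - 1 with hP
  -- rank A = s
  have hrA : A.rank = s := by
    refine le_antisymm (A.rank_le_card_width.trans (by simp)) ?_
    have := Matrix.rank_mul_le_right Aᴴ A
    rwa [hA, Matrix.rank_one, Fintype.card_fin] at this
  have hsN : s ≤ N := by
    have := A.rank_le_card_height
    simp only [Fintype.card_fin] at this
    omega
  -- P * A = 0
  have hPA : P * A = 0 := by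
    rw [hP, Matrix.sub_mul, Matrix.one_mul, Matrix.mul_assoc, hA, Matrix.mul_one, sub_self]
  -- rank P ≤ N - s
  have hkerP : s ≤ Module.finrank ℂ (LinearMap.ker P.mulVecLin) := by
    have hle : LinearMap.range A.mulVecLin ≤ LinearMap.ker P.mulVecLin := by
      rintro x ⟨y, rfl⟩
      simp only [LinearMap.mem_ker, Matrix.mulVecLin_apply, Matrix.mulVec_mulVec, hPA,
        Matrix.zero_mulVec]
    have := Submodule.finrank_mono hle
    rwa [← Matrix.rank, hrA] at this
  have hrkP : P.rank ≤ N - s := by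
    have := P.mulVecLin.finrank_range_add_finrank_ker
    simp only [Module.finrank_pi, Fintype.card_fin] at this
    have hr : P.rank = Module.finrank ℂ (LinearMap.range P.mulVecLin) := rfl
    omega
  -- M - 1 = Bᴴ * (P * B)
  have hM1 : M - 1 = Bᴴ * (P * B) := by
    rw [hM, hP, Matrix.sub_mul, Matrix.one_mul, Matrix.mul_sub, hB, Matrix.mul_assoc,
      ← Matrix.mul_assoc A Aᴴ B, ← Matrix.mul_assoc Bᴴ (A * Aᴴ) B, ← Matrix.mul_assoc]
  -- rank (M-1) ≤ N - s
  have hrkM : (M - 1).rank ≤ N - s := by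
    rw [hM1]
    exact le_trans (Matrix.rank_mul_le_right _ _) (le_trans (Matrix.rank_mul_le_left _ _) hrkP)
  -- kernel dim bound
  have hker : k ≤ Module.finrank ℂ (LinearMap.ker (M - 1).mulVecLin) := by
    have := (M - 1).mulVecLin.finrank_range_add_finrank_ker
    simp only [Module.finrank_pi, Fintype.card_fin] at this
    have hr : (M - 1).rank = Module.finrank ℂ (LinearMap.range (M - 1).mulVecLin) := rfl
    omega
  have hdvd0 : X ^ k ∣ (M - 1).charpoly := aux_X_pow_dvd _ _ hker
  have hcomp : (M - 1).charpoly = M.charpoly.comp (X + 1) := aux_charpoly_sub_one M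
  have hdvd : (X - 1) ^ k ∣ M.charpoly := by
    obtain ⟨u, hu⟩ := hdvd0
    rw [hcomp] at hu
    have := congrArg (fun p => p.comp (X - 1 : ℂ[X])) hu
    simp only [mul_comp, X_pow_comp, comp_assoc, add_comp, X_comp, one_comp] at this
    rw [show (X - 1 + 1 : ℂ[X]) = X by ring, comp_X] at this
    exact ⟨u.comp (X - 1), this⟩
  refine ⟨hdvd, ?_⟩
  rw [Polynomial.le_rootMultiplicity_iff M.charpoly_monic.ne_zero]
  simpa using hdvd
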